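/- Let p be a prime and n ≥ 0. The numerical semigroup Γ_{p,n} = ⟨p^n, p^n - p^{n-1}, ..., p^n - 1⟩ is symmetric: an integer m with 0 ≤ m ≤ c - 1 belongs to Γ_{p,n} if and only if c - 1 - m does not, where c = n·p^{n+1} - (n+2)·p^n + 2 is the conductor. Consequently the number of gaps (genus) equals c/2. -/

import Mathlib

/-- Generators `p^n` and `p^n - p^j` (`0 ≤ j ≤ n-1`) of `Γ_{p,n}`. -/
def gammaGen (p n : ℕ) : Set ℕ :=
  {m | m = p ^ n ∨ ∃ j < n, m = p ^ n - p ^ j}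

/-- The numerical semigroup `Γ_{p,n} = ⟨p^n, p^n - p^{n-1}, …, p^n - 1⟩`. -/
def Gamma (p n : ℕ) : AddSubmonoid ℕ := AddSubmonoid.closure (gammaGen p n)


def condN (p : ℕ) : ℕ → ℕ
  | 0 => 0
  | n+1 => p * condN p n + (p - 1) * (p ^ (n+1) - 2)

lemma cond_cast {p : ℕ} (hp : 2 ≤ p) (n : ℕ) :
    (condN p n : ℤ) = n * p ^ (n + 1) - (n + 2) * p ^ n + 2 := by
  induction n with
  | zero => show ((0:ℕ):ℤ) = _; norm_num
  | succ n ih =>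
    have h1 : (1:ℕ) ≤ p := by omega
    have h2 : (2:ℕ) ≤ p ^ (n+1) := le_trans hp (Nat.le_self_pow (Nat.succ_ne_zero n) p)
    show ((p * condN p n + (p - 1) * (p ^ (n+1) - 2) : ℕ) : ℤ) = _
    rw [Nat.cast_add, Nat.cast_mul, Nat.cast_mul, Nat.cast_sub h1, Nat.cast_sub h2, ih]
    push_cast
    ring

/-- The key gluing lemma. -/
lemma glue {S T : AddSubmonoid ℕ} {p a c C : ℕ}
    (hp : 2 ≤ p) (ha : a ∈ S) (ha1 : 1 ≤ a) (hgcd : Nat.Coprime a p)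
    (hup : ∀ m : ℕ, c ≤ m → m ∈ S)
    (hsym : ∀ m : ℕ, m < c → (m ∈ S ↔ c - 1 - m ∉ S))
    (hT : ∀ m : ℕ, m ∈ T ↔ ∃ x ∈ S, ∃ t, m = p * x + t * a)
    (hC : C = p * c + (p - 1) * (a - 1)) :
    (∀ m : ℕ, C ≤ m → m ∈ T) ∧ (∀ m : ℕ, m < C → (m ∈ T ↔ C - 1 - m ∉ T)) := by
  haveI : NeZero p := ⟨by omega⟩
  set d : ℕ → ℕ := fun m => ((m : ZMod p) * (a : ZMod p)⁻¹).val with hdef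
  have hdlt : ∀ m : ℕ, d m < p := fun m => ZMod.val_lt _
  have hunit : IsUnit (a : ZMod p) := (ZMod.isUnit_iff_coprime a p).mpr hgcd
  have hdz : ∀ m : ℕ, ((d m : ℕ) : ZMod p) = (m : ZMod p) * (a : ZMod p)⁻¹ := by
    intro m
    simp [hdef, ZMod.natCast_val, ZMod.cast_id]
  have hd : ∀ m : ℕ, ((d m * a : ℕ) : ZMod p) = (m : ZMod p) := by
    intro m
    push_cast
    rw [hdz m, mul_assoc, ZMod.inv_mul_of_unit _ hunit, mul_one]
  have hdvd : ∀ m : ℕ, (p:ℤ) ∣ (m : ℤ) - ((d m * a : ℕ) : ℤ) :=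
    fun m => ((ZMod.natCast_eq_natCast_iff _ _ _).mp (hd m)).dvd
  have hdt : ∀ m t : ℕ, ((t * a : ℕ) : ZMod p) = (m : ZMod p) → t % p = d m := by
    intro m t h
    have h3 : ((t * a : ℕ) : ZMod p) * (a : ZMod p)⁻¹ = (m : ZMod p) * (a : ZMod p)⁻¹ := by
      rw [h]
    push_cast at h3
    rw [mul_assoc, ZMod.mul_inv_of_unit _ hunit, mul_one] at h3
    calc t % p = (t : ZMod p).val := (ZMod.val_natCast p t).symm
      _ = d m := by rw [h3]
  have charA : ∀ m : ℕ, m ∈ T ↔ ∃ x ∈ S, m = p * x + d m * a := by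
    intro m
    constructor
    · intro hm
      obtain ⟨x, hx, t, rfl⟩ := (hT _).mp hm
      have ht : t % p = d (p * x + t * a) := by
        apply hdt
        push_cast
        simp [ZMod.natCast_self]
      refine ⟨x + t / p * a, ?_, ?_⟩
      · refine S.add_mem hx ?_
        have h4 := S.nsmul_mem ha (t / p)
        rwa [smul_eq_mul] at h4
      · have e : p * (x + t / p * a) + (t % p) * a = p * x + (p * (t / p) + t % p) * a := by
          ring
        rw [Nat.div_add_mod] at e
        rw [← ht]
        exact e.symm
    · rintro ⟨x, hx, h⟩
      exact (hT m).mpr ⟨x, hx, d m, h⟩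
  have hCZ : (C : ℤ) = (p:ℤ) * c + (p:ℤ) * a - p - a + 1 := by
    rw [hC, Nat.cast_add, Nat.cast_mul, Nat.cast_mul, Nat.cast_sub (by omega : 1 ≤ p),
      Nat.cast_sub ha1]
    push_cast
    ring
  have memT : ∀ (m : ℕ) (k : ℤ), (m : ℤ) - ((d m * a : ℕ) : ℤ) = p * k → 0 ≤ k →
      k.toNat ∈ S → m ∈ T := by
    intro m k hk hk0 hkS
    refine (hT m).mpr ⟨k.toNat, hkS, d m, ?_⟩
    have h5 : (m : ℤ) = (p:ℤ) * (k.toNat : ℤ) + ((d m * a : ℕ) : ℤ) := by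
      rw [Int.toNat_of_nonneg hk0]; omega
    exact_mod_cast h5
  have Tup : ∀ m : ℕ, C ≤ m → m ∈ T := by
    intro m hm
    obtain ⟨k, hk⟩ := hdvd m
    have hda : ((d m * a : ℕ) : ℤ) ≤ (p:ℤ) * a - a := by
      have h6 : (d m : ℤ) ≤ (p:ℤ) - 1 := by have := hdlt m; omega
      have ha0 : (0:ℤ) ≤ a := by positivity
      push_cast
      nlinarith
    have hm' : (C:ℤ) ≤ m := by exact_mod_cast hm
    have hmk : (p:ℤ) * c - (p:ℤ) + 1 ≤ (p:ℤ) * k := by linarith [hk, hm', hda, hCZ]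
    have hkc : (c : ℤ) ≤ k := by
      by_contra hcon
      push_neg at hcon
      have h1 : k + 1 ≤ (c:ℤ) := hcon
      have h2 : (p:ℤ) * (k+1) ≤ (p:ℤ) * c :=
        mul_le_mul_of_nonneg_left h1 (by positivity)
      linarith
    have hk0 : (0:ℤ) ≤ k := le_trans (by positivity) hkc
    refine memT m k hk hk0 (hup _ ?_)
    omega
  refine ⟨Tup, ?_⟩
  intro m hm
  set m' := C - 1 - m with hm'def
  have hmm' : m + m' = C - 1 := by omega
  have hdd : d m + d m' = p - 1 := by
    have e1 : ((C - 1 + p : ℕ) : ℤ) = ((p * c + (p - 1) * a : ℕ) : ℤ) := by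
      rw [Nat.cast_add, Nat.cast_sub (by omega : 1 ≤ C), Nat.cast_add, Nat.cast_mul,
        Nat.cast_mul, Nat.cast_sub (by omega : 1 ≤ p)]
      push_cast
      linarith [hCZ]
    have e1' : C - 1 + p = p * c + (p - 1) * a := by exact_mod_cast e1
    have e2 : ((d m * a + d m' * a : ℕ) : ZMod p) = ((m + m' : ℕ) : ZMod p) := by
      rw [Nat.cast_add, Nat.cast_add, hd m, hd m']
    have e3 : ((m + m' : ℕ) : ZMod p) = (((p-1) * a : ℕ) : ZMod p) := by
      rw [hmm']
      have e4 : ((C - 1 : ℕ) : ZMod p) = ((C - 1 + p : ℕ) : ZMod p) := by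
        push_cast
        simp [ZMod.natCast_self]
      rw [e4, e1']
      push_cast
      simp [ZMod.natCast_self]
    have key : ((d m + d m' : ℕ) : ZMod p) * (a : ZMod p)
        = ((p - 1 : ℕ) : ZMod p) * (a : ZMod p) := by
      have lhs : ((d m + d m' : ℕ) : ZMod p) * (a : ZMod p)
          = ((d m * a + d m' * a : ℕ) : ZMod p) := by push_cast; ring
      have rhs : ((p - 1 : ℕ) : ZMod p) * (a : ZMod p) = (((p-1) * a : ℕ) : ZMod p) := by
        push_cast; ring
      rw [lhs, rhs, e2, e3]
    have key2 : ((d m + d m' : ℕ) : ZMod p) = ((p - 1 : ℕ) : ZMod p) := by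
      have h7 : ((d m + d m' : ℕ) : ZMod p) * (a : ZMod p) * (a : ZMod p)⁻¹
          = ((p - 1 : ℕ) : ZMod p) * (a : ZMod p) * (a : ZMod p)⁻¹ := by rw [key]
      rwa [mul_assoc, ZMod.mul_inv_of_unit _ hunit, mul_one, mul_assoc,
        ZMod.mul_inv_of_unit _ hunit, mul_one] at h7
    have hmod : (d m + d m') % p = (p - 1) % p := by
      rw [← ZMod.val_natCast p (d m + d m'), ← ZMod.val_natCast p (p-1)]
      exact congrArg ZMod.val key2
    rw [show (p - 1) % p = p - 1 from Nat.mod_eq_of_lt (by omega)] at hmod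
    have hs : d m + d m' ≤ 2 * p - 2 := by have := hdlt m; have := hdlt m'; omega
    rcases lt_or_ge (d m + d m') p with hcs | hcs
    · rw [Nat.mod_eq_of_lt hcs] at hmod
      omega
    · rw [Nat.mod_eq_sub_mod hcs, Nat.mod_eq_of_lt (by omega)] at hmod
      omega
  obtain ⟨k, hk⟩ := hdvd m
  obtain ⟨k', hk'⟩ := hdvd m'
  have hp0 : (p:ℤ) ≠ 0 := by positivity
  have hkk' : k + k' = (c : ℤ) - 1 := by
    have hsum : (m : ℤ) + (m' : ℤ) = (C:ℤ) - 1 := by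
      have h9 : ((m + m' : ℕ) : ℤ) = ((C - 1 : ℕ) : ℤ) := by rw [hmm']
      rw [Nat.cast_add, Nat.cast_sub (by omega : 1 ≤ C)] at h9
      push_cast at h9
      linarith
    have hdmz : (d m : ℤ) + (d m' : ℤ) = (p : ℤ) - 1 := by
      have h10 : ((d m + d m' : ℕ) : ℤ) = ((p - 1 : ℕ) : ℤ) := by rw [hdd]
      rw [Nat.cast_add, Nat.cast_sub (by omega : 1 ≤ p)] at h10
      push_cast at h10
      linarith
    have hda : ((d m * a : ℕ) : ℤ) + ((d m' * a : ℕ) : ℤ) = (p:ℤ) * a - a := by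
      push_cast
      linear_combination (a:ℤ) * hdmz
    have h11 : (p:ℤ) * (k + k') = (p:ℤ) * ((c:ℤ) - 1) := by
      linarith [hk, hk', hsum, hda, hCZ]
    exact mul_left_cancel₀ hp0 h11
  constructor
  · intro hmT hm'T
    obtain ⟨x, hx, hxe⟩ := (charA m).mp hmT
    obtain ⟨x', hx', hxe'⟩ := (charA m').mp hm'T
    have hkx : k = (x : ℤ) := by
      have h12 : (m:ℤ) = ((p * x : ℕ) : ℤ) + ((d m * a : ℕ) : ℤ) := by
        rw [← Nat.cast_add, ← hxe]
      have h13 : (p:ℤ) * k = ((p * x : ℕ) : ℤ) := by omega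
      push_cast at h13
      exact mul_left_cancel₀ hp0 h13
    have hkx' : k' = (x' : ℤ) := by
      have h14 : (m':ℤ) = ((p * x' : ℕ) : ℤ) + ((d m' * a : ℕ) : ℤ) := by
        rw [← Nat.cast_add, ← hxe']
      have h15 : (p:ℤ) * k' = ((p * x' : ℕ) : ℤ) := by omega
      push_cast at h15
      exact mul_left_cancel₀ hp0 h15
    have hxx' : x + x' + 1 = c := by
      have h16 : (x:ℤ) + (x':ℤ) + 1 = (c:ℤ) := by omega
      exact_mod_cast h16
    have hxc : x < c := by omega
    have hx'' : c - 1 - x = x' := by omega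
    exact ((hsym x hxc).mp hx) (hx'' ▸ hx')
  · intro hm'T
    by_contra hmT
    apply hm'T
    by_cases hk0 : 0 ≤ k
    · have hxe : m = p * k.toNat + d m * a := by
        have h17 : (m : ℤ) = (p:ℤ) * (k.toNat : ℤ) + ((d m * a : ℕ) : ℤ) := by
          rw [Int.toNat_of_nonneg hk0]; omega
        exact_mod_cast h17
      have hxS : k.toNat ∉ S := fun h => hmT ((charA m).mpr ⟨k.toNat, h, hxe⟩)
      have hxc : k.toNat < c := by
        by_contra h
        exact hxS (hup _ (by omega))
      have hx'S : c - 1 - k.toNat ∈ S := by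
        by_contra h2
        exact hxS ((hsym _ hxc).mpr h2)
      refine memT m' k' hk' (by omega) ?_
      have h18 : k'.toNat = c - 1 - k.toNat := by omega
      rwa [h18]
    · refine memT m' k' hk' (by omega) (hup _ ?_)
      omega

section GammaPart

variable {p : ℕ}

lemma gpow_mem (n : ℕ) : p ^ n ∈ Gamma p n :=
  AddSubmonoid.subset_closure (Or.inl rfl)

lemma gsub_mem {n j : ℕ} (hj : j < n) : p ^ n - p ^ j ∈ Gamma p n :=
  AddSubmonoid.subset_closure (Or.inr ⟨j, hj, rfl⟩)

lemma a_mem (hp : 2 ≤ p) (n : ℕ) : p ^ (n+1) - 1 ∈ Gamma p n := by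
  have h1 : p ^ n - 1 ∈ Gamma p n := by
    cases n with
    | zero => simpa using (Gamma p 0).zero_mem
    | succ k =>
      have := gsub_mem (p := p) (Nat.succ_pos k)
      rwa [pow_zero] at this
  have h3 : (p - 1) • p ^ n ∈ Gamma p n := (Gamma p n).nsmul_mem (gpow_mem n) _
  have h4 := (Gamma p n).add_mem h3 h1
  have hpn : 1 ≤ p ^ n := Nat.one_le_pow _ _ (by omega)
  have e : (p - 1) * p ^ n = p ^ (n+1) - p ^ n := by
    rw [Nat.sub_mul, one_mul, ← pow_succ']
  have harith : (p - 1) • p ^ n + (p ^ n - 1) = p ^ (n+1) - 1 := by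
    rw [smul_eq_mul, e]
    have : p ^ n ≤ p ^ (n+1) := Nat.pow_le_pow_right (by omega) (by omega)
    omega
  rwa [harith] at h4

lemma a_coprime (hp : 2 ≤ p) (n : ℕ) : Nat.Coprime (p ^ (n+1) - 1) p := by
  have h2 : 2 ≤ p ^ (n+1) := le_trans hp (Nat.le_self_pow (Nat.succ_ne_zero n) p)
  have hg1 : Nat.gcd (p ^ (n+1) - 1) p ∣ p ^ (n+1) :=
    dvd_trans (Nat.gcd_dvd_right _ _) (dvd_pow_self p (Nat.succ_ne_zero n))
  have hg2 : Nat.gcd (p ^ (n+1) - 1) p ∣ p ^ (n+1) - 1 := Nat.gcd_dvd_left _ _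
  have hg3 : Nat.gcd (p ^ (n+1) - 1) p ∣ 1 := by
    have := Nat.dvd_sub hg1 hg2
    rwa [Nat.sub_sub_self (by omega)] at this
  exact Nat.dvd_one.mp hg3

lemma gamma_succ_mem (hp : 2 ≤ p) (n : ℕ) (m : ℕ) :
    m ∈ Gamma p (n+1) ↔ ∃ x ∈ Gamma p n, ∃ t, m = p * x + t * (p ^ (n+1) - 1) := by
  have hpowle : ∀ i k : ℕ, i ≤ k → p ^ i ≤ p ^ k := fun i k h =>
    Nat.pow_le_pow_right (by omega) h
  have hmul : ∀ i, i < n → p * (p ^ n - p ^ i) = p ^ (n+1) - p ^ (i+1) := by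
    intro i hi
    rw [Nat.mul_sub, ← pow_succ', ← pow_succ']
  constructor
  · intro hm
    induction hm using AddSubmonoid.closure_induction with
    | mem x hx =>
      rcases hx with rfl | ⟨j, hj, rfl⟩
      · refine ⟨p ^ n, gpow_mem n, 0, by ring⟩
      · rcases Nat.eq_zero_or_pos j with rfl | hj0
        · exact ⟨0, (Gamma p n).zero_mem, 1, by simp⟩
        · obtain ⟨i, rfl⟩ := Nat.exists_eq_add_of_le hj0
          refine ⟨p ^ n - p ^ i, gsub_mem (by omega), 0, ?_⟩
          rw [hmul i (by omega)]
          simp [add_comm 1 i]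
    | zero => exact ⟨0, (Gamma p n).zero_mem, 0, by simp⟩
    | add x y hx hy ihx ihy =>
      obtain ⟨x1, hx1, t1, rfl⟩ := ihx
      obtain ⟨x2, hx2, t2, rfl⟩ := ihy
      exact ⟨x1 + x2, (Gamma p n).add_mem hx1 hx2, t1 + t2, by ring⟩
  · rintro ⟨x, hx, t, rfl⟩
    have hmulmem : p * x ∈ Gamma p (n+1) := by
      induction hx using AddSubmonoid.closure_induction with
      | mem y hy =>
        rcases hy with rfl | ⟨j, hj, rfl⟩
        · have : p * p ^ n = p ^ (n+1) := (pow_succ' p n).symm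
          rw [this]; exact gpow_mem (n+1)
        · rw [hmul j hj]; exact gsub_mem (by omega)
      | zero => simpa using (Gamma p (n+1)).zero_mem
      | add y z hy hz ihy ihz =>
        rw [Nat.mul_add]; exact (Gamma p (n+1)).add_mem ihy ihz
    have haG : p ^ (n+1) - 1 ∈ Gamma p (n+1) := by
      have := gsub_mem (p := p) (Nat.succ_pos n)
      rwa [pow_zero] at this
    have htmem : t * (p ^ (n+1) - 1) ∈ Gamma p (n+1) := by
      have := (Gamma p (n+1)).nsmul_mem haG t
      rwa [smul_eq_mul] at this
    exact (Gamma p (n+1)).add_mem hmulmem htmem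

end GammaPart

lemma genus_count (T : AddSubmonoid ℕ) (C : ℕ)
    (hup : ∀ m : ℕ, C ≤ m → m ∈ T)
    (hsym : ∀ m : ℕ, m < C → (m ∈ T ↔ C - 1 - m ∉ T)) :
    {m : ℕ | m ∉ T}.ncard = C / 2 := by
  classical
  have hset : {m : ℕ | m ∉ T} = ↑((Finset.range C).filter (fun m => m ∉ T)) := by
    ext m
    simp only [Set.mem_setOf_eq, Finset.coe_filter, Finset.mem_range]
    constructor
    · intro h
      refine ⟨?_, h⟩
      by_contra hc
      exact h (hup m (by omega))
    · exact fun h => h.2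
  rw [hset, Set.ncard_coe_finset]
  have hcards : ((Finset.range C).filter (fun m => m ∉ T)).card
      = ((Finset.range C).filter (fun m => m ∈ T)).card := by
    apply Finset.card_bij (fun m _ => C - 1 - m)
    · intro m hm
      simp only [Finset.mem_filter, Finset.mem_range] at hm ⊢
      refine ⟨by omega, ?_⟩
      by_contra h2
      exact hm.2 ((hsym m hm.1).mpr h2)
    · intro m1 hm1 m2 hm2 h
      simp only [Finset.mem_filter, Finset.mem_range] at hm1 hm2
      omega
    · intro b hb
      simp only [Finset.mem_filter, Finset.mem_range] at hb
      refine ⟨C - 1 - b, ?_, by omega⟩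
      simp only [Finset.mem_filter, Finset.mem_range]
      refine ⟨by omega, ?_⟩
      have h3 := (hsym (C - 1 - b) (by omega)).mp
      intro h4
      have h5 := h3 h4
      rw [show C - 1 - (C - 1 - b) = b by omega] at h5
      exact h5 hb.2
  have htot := Finset.card_filter_add_card_filter_not
    (s := Finset.range C) (p := fun m => m ∉ T)
  simp only [not_not, Finset.card_range] at htot
  omega

lemma gamma_main {p : ℕ} (hp : 2 ≤ p) (n : ℕ) :
    (∀ m : ℕ, condN p n ≤ m → m ∈ Gamma p n) ∧
    (∀ m : ℕ, m < condN p n → (m ∈ Gamma p n ↔ condN p n - 1 - m ∉ Gamma p n)) := by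
  induction n with
  | zero =>
    constructor
    · intro m _
      have h1 : (1:ℕ) ∈ Gamma p 0 := by
        apply AddSubmonoid.subset_closure
        left
        rw [pow_zero]
      have := (Gamma p 0).nsmul_mem h1 m
      simpa using this
    · intro m hm
      simp [condN] at hm
  | succ n ih =>
    have ha1 : 1 ≤ p ^ (n+1) - 1 := by
      have : 2 ≤ p ^ (n+1) := le_trans hp (Nat.le_self_pow (Nat.succ_ne_zero n) p)
      omega
    have hCc : condN p (n+1) = p * condN p n + (p - 1) * (p ^ (n+1) - 1 - 1) := by
      show p * condN p n + (p - 1) * (p ^ (n+1) - 2) = _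
      congr 1
    exact glue hp (a_mem hp n) ha1 (a_coprime hp n) ih.1 ih.2
      (gamma_succ_mem hp n) hCc

/-- `Γ_{p,n}` is symmetric: for `0 ≤ m ≤ c - 1` one has `m ∈ Γ_{p,n}` iff
`c - 1 - m ∉ Γ_{p,n}`, where `c = n·p^{n+1} - (n+2)·p^n + 2` is the conductor;
consequently the number of gaps (the genus) equals `c/2`. -/
theorem Gamma_symmetric (p n : ℕ) (hp : p.Prime) (c : ℕ)
    (hc : (c : ℤ) = n * p ^ (n + 1) - (n + 2) * p ^ n + 2) :
    (∀ m, m < c → (m ∈ Gamma p n ↔ c - 1 - m ∉ Gamma p n)) ∧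
    {m : ℕ | m ∉ Gamma p n}.ncard = c / 2 := by
  have hp2 := hp.two_le
  have hceq : c = condN p n := by
    have h1 := cond_cast hp2 n
    have h : (c:ℤ) = (condN p n : ℤ) := by rw [hc, h1]
    exact_mod_cast h
  obtain ⟨hup, hsym⟩ := gamma_main hp2 n
  rw [hceq]
  exact ⟨hsym, genus_count _ _ hup hsym⟩
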